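/- Let G be an LCA group and H a uniform lattice in G. Then there exists a Borel measurable set C ⊆ G which is a section of G/H, i.e., C contains exactly one representative of each coset of H; moreover, C can be chosen relatively compact. -/

import Mathlib

open Pointwise


/-- If `G` is an LCA group and `H` a uniform lattice in `G` (a discrete subgroup with compact
quotient), then there exists a Borel measurable section `C` of `G ⧸ H`, i.e. a Borel set
containing exactly one representative of each coset of `H`; moreover `C` can be chosen
relatively compact. -/
theorem exists_borel_section_of_uniform_lattice
    (G : Type*) [CommGroup G] [TopologicalSpace G] [IsTopologicalGroup G]
    [LocallyCompactSpace G] [T2Space G]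
    [MeasurableSpace G] [BorelSpace G]
    (H : Subgroup G) (hHdisc : DiscreteTopology ↥H) (hHcocompact : CompactSpace (G ⧸ H)) :
    ∃ C : Set G, MeasurableSet C ∧
      (∀ x : G, ∃! c : G, c ∈ C ∧ c⁻¹ * x ∈ H) ∧
      IsCompact (closure C) := by
  classical
  -- An open set W around 1 isolating the identity in H
  obtain ⟨W, hWopen, hW1, hWH⟩ :
      ∃ W : Set G, IsOpen W ∧ (1 : G) ∈ W ∧ ∀ h ∈ W, h ∈ H → h = 1 := by
    have h1 : IsOpen ({1} : Set ↥H) := isOpen_discrete _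
    rw [isOpen_induced_iff] at h1
    obtain ⟨W, hWopen, hW⟩ := h1
    refine ⟨W, hWopen, ?_, ?_⟩
    · have : ((1 : ↥H) : G) ∈ W := by
        have : (1 : ↥H) ∈ (Subtype.val ⁻¹' W : Set ↥H) := by rw [hW]; rfl
        exact this
      simpa using this
    · intro h hhW hhH
      have : (⟨h, hhH⟩ : ↥H) ∈ (Subtype.val ⁻¹' W : Set ↥H) := hhW
      rw [hW] at this
      simpa using congrArg Subtype.val this
  -- A compact neighborhood of 1
  obtain ⟨K, hKc, hK⟩ := exists_compact_mem_nhds (1 : G)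
  -- A small open set V
  obtain ⟨V0, hV0open, hV01, hV0W⟩ := exists_open_nhds_one_mul_subset (hWopen.mem_nhds hW1)
  set V : Set G := (V0 ∩ V0⁻¹) ∩ interior K with hVdef
  have hVopen : IsOpen V := (hV0open.inter hV0open.inv).inter isOpen_interior
  have hV1 : (1 : G) ∈ V :=
    ⟨⟨hV01, by simpa using hV01⟩, mem_interior_iff_mem_nhds.2 hK⟩
  have hVdiv : ∀ a ∈ V, ∀ b ∈ V, a⁻¹ * b ∈ W := by
    intro a ha b hb
    exact hV0W (Set.mul_mem_mul (Set.mem_inv.1 ha.1.2) hb.1.1)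
  have hVcl : IsCompact (closure V) := by
    refine hKc.of_isClosed_subset isClosed_closure ?_
    exact closure_minimal (Set.inter_subset_right.trans interior_subset) hKc.isClosed
  -- Cover the compact quotient by finitely many translates of V
  have hcover : (Set.univ : Set (G ⧸ H)) ⊆ ⋃ g : G, (QuotientGroup.mk : G → G ⧸ H) '' (g • V) := by
    rintro q -
    obtain ⟨x, rfl⟩ := QuotientGroup.mk_surjective q
    refine Set.mem_iUnion.2 ⟨x, ⟨x, ?_, rfl⟩⟩
    simpa using Set.smul_mem_smul_set (a := x) hV1
  obtain ⟨t, ht⟩ := isCompact_univ.elim_finite_subcover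
    (fun g : G => (QuotientGroup.mk : G → G ⧸ H) '' (g • V))
    (fun g => QuotientGroup.isOpenMap_coe _ (hVopen.smul g)) hcover
  set l : List G := t.toList with hldef
  set n : ℕ := l.length with hndef
  set g : ℕ → G := fun i => l.getD i 1 with hgdef
  -- The section
  set C : Set G :=
    ⋃ i ∈ Finset.range n,
      ((g i • V) \ ⋃ j ∈ Finset.range i, ((g j • V) * (H : Set G))) with hCdef
  -- every x lies in some (g i • V) * H
  have hx_cov : ∀ x : G, ∃ i < n, x ∈ (g i • V) * (H : Set G) := by
    intro x
    have := ht (Set.mem_univ (QuotientGroup.mk x : G ⧸ H))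
    rw [Set.mem_iUnion₂] at this
    obtain ⟨a, hat, hmem⟩ := this
    obtain ⟨v, hvV, hv⟩ := hmem
    have hvx : v⁻¹ * x ∈ H := (QuotientGroup.eq (s := H)).1 hv
    obtain ⟨i, hi, hia⟩ := List.mem_iff_getElem.1 (Finset.mem_toList.2 hat)
    refine ⟨i, hi, ?_⟩
    have hgi : g i = a := by
      rw [hgdef]; simp only []
      rw [List.getD_eq_getElem l 1 hi, hia]
    rw [hgi]
    exact ⟨v, hvV, v⁻¹ * x, hvx, by group⟩
  -- membership in (g j • V) * H only depends on the coset
  have hcoset : ∀ (j : ℕ) (c x : G), c⁻¹ * x ∈ H →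
      (c ∈ (g j • V) * (H : Set G) → x ∈ (g j • V) * (H : Set G)) := by
    intro j c x hcx hc
    obtain ⟨b, hb, h', hh', hbh⟩ := hc
    refine ⟨b, hb, h' * (c⁻¹ * x), mul_mem hh' hcx, ?_⟩
    have hbh' : b * h' = c := hbh
    show b * (h' * (c⁻¹ * x)) = x
    calc b * (h' * (c⁻¹ * x)) = (b * h') * (c⁻¹ * x) := by group
      _ = c * (c⁻¹ * x) := by rw [hbh']
      _ = x := by group
  refine ⟨C, ?_, ?_, ?_⟩
  · -- measurability
    refine Finset.measurableSet_biUnion _ fun i _ => ?_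
    refine ((hVopen.smul (g i)).measurableSet).diff ?_
    refine Finset.measurableSet_biUnion _ fun j _ => ?_
    exact ((hVopen.smul (g j)).mul_right).measurableSet
  · -- section property
    intro x
    -- existence
    have hex : ∃ i, i < n ∧ x ∈ (g i • V) * (H : Set G) := by
      obtain ⟨i, hi, hmem⟩ := hx_cov x; exact ⟨i, hi, hmem⟩
    set i0 := Nat.find hex with hi0def
    obtain ⟨hi0n, hi0mem⟩ := Nat.find_spec hex
    obtain ⟨c, hcV, h, hhH, hch⟩ := hi0mem
    have hcx : c⁻¹ * x ∈ H := by
      have : c⁻¹ * x = h := by rw [← hch]; group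
      rw [this]; exact hhH
    have hcC : c ∈ C := by
      rw [hCdef]
      refine Set.mem_biUnion (Finset.mem_range.2 hi0n) ⟨hcV, ?_⟩
      intro hcbad
      rw [Set.mem_iUnion₂] at hcbad
      obtain ⟨j, hj, hcj⟩ := hcbad
      have hji : j < i0 := Finset.mem_range.1 hj
      have : x ∈ (g j • V) * (H : Set G) := hcoset j c x hcx hcj
      exact Nat.find_min hex hji ⟨hji.trans hi0n, this⟩
    -- key uniqueness claim
    have key : ∀ c₁ c₂ : G, (c₁ ∈ C ∧ c₁⁻¹ * x ∈ H) → (c₂ ∈ C ∧ c₂⁻¹ * x ∈ H) → c₁ = c₂ := by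
      rintro c₁ c₂ ⟨hc₁C, hc₁x⟩ ⟨hc₂C, hc₂x⟩
      rw [hCdef, Set.mem_iUnion₂] at hc₁C hc₂C
      obtain ⟨i, hi, hc₁V, hc₁bad⟩ := hc₁C
      obtain ⟨j, hj, hc₂V, hc₂bad⟩ := hc₂C
      have hc12 : c₁⁻¹ * c₂ ∈ H := by
        have : c₁⁻¹ * c₂ = (c₁⁻¹ * x) * (c₂⁻¹ * x)⁻¹ := by group
        rw [this]; exact mul_mem hc₁x (inv_mem hc₂x)
      have hij : i = j := by
        by_contra hne
        rcases Nat.lt_or_ge i j with hlt | hge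
        · -- c₂ would be in (g i • V) * H, contradiction
          have hc2i : c₂ ∈ (g i • V) * (H : Set G) :=
            hcoset i c₁ c₂ hc12 ⟨c₁, hc₁V, 1, one_mem _, mul_one c₁⟩
          exact hc₂bad (Set.mem_biUnion (Finset.mem_range.2 hlt) hc2i)
        · have hlt : j < i := lt_of_le_of_ne hge (fun h => hne h.symm)
          have hc21 : c₂⁻¹ * c₁ ∈ H := by simpa using inv_mem hc12
          have hc1j : c₁ ∈ (g j • V) * (H : Set G) :=
            hcoset j c₂ c₁ hc21 ⟨c₂, hc₂V, 1, one_mem _, mul_one c₂⟩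
          exact hc₁bad (Set.mem_biUnion (Finset.mem_range.2 hlt) hc1j)
      subst hij
      obtain ⟨v₁, hv₁, hv₁e⟩ := hc₁V
      obtain ⟨v₂, hv₂, hv₂e⟩ := hc₂V
      have hW' : v₁⁻¹ * v₂ ∈ W := hVdiv v₁ hv₁ v₂ hv₂
      have heq : c₁⁻¹ * c₂ = v₁⁻¹ * v₂ := by
        rw [← hv₁e, ← hv₂e]; simp only [smul_eq_mul]; group
      have h1 : c₁⁻¹ * c₂ = 1 := by
        rw [heq]; exact hWH _ hW' (heq ▸ hc12)
      exact (inv_mul_eq_one.mp h1)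
    exact ⟨c, ⟨hcC, hcx⟩, fun y hy => key y c hy ⟨hcC, hcx⟩⟩
  · -- relative compactness
    have hsub : C ⊆ ⋃ i ∈ Finset.range n, (g i • closure V) := by
      intro y hy
      rw [hCdef, Set.mem_iUnion₂] at hy
      obtain ⟨i, hi, hyV, -⟩ := hy
      exact Set.mem_biUnion hi (Set.smul_set_mono subset_closure hyV)
    have hTcomp : IsCompact (⋃ i ∈ Finset.range n, (g i • closure V)) := by
      refine (Finset.range n).isCompact_biUnion fun i _ => ?_
      exact hVcl.smul (g i)
    refine hTcomp.of_isClosed_subset isClosed_closure ?_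
    exact closure_minimal hsub hTcomp.isClosed
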